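/- Every ascending chain S₁ ≤ S₂ ≤ S₃ ≤ ⋯ of infinite virtually cyclic subgroups of a group G whose union is also virtually cyclic eventually stabilizes: there exists N such that S_N = S_i for all i ≥ N. -/

import Mathlib

/-- A group is virtually cyclic if it has a cyclic subgroup of finite index. -/
def IsVirtuallyCyclic (G : Type*) [Group G] : Prop :=
  ∃ H : Subgroup G, IsCyclic H ∧ H.FiniteIndex

/-- A nontrivial subgroup of a cyclic group has finite index. -/
lemma aux_cyclic_finiteIndex {C : Type*} [Group C] [IsCyclic C]
    (K : Subgroup C) (hK : K ≠ ⊥) : K.FiniteIndex := by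
  obtain ⟨g, hg⟩ := IsCyclic.exists_generator (α := C)
  obtain ⟨x, hx1⟩ := Subgroup.ne_bot_iff_exists_ne_one.mp hK
  obtain ⟨n, hn⟩ := hg (x : C)
  have hn0 : n ≠ 0 := by
    rintro rfl
    simp only [zpow_zero] at hn
    exact hx1 (Subtype.ext hn.symm)
  have hn' : g ^ n = (x : C) := hn
  have hcomm : ∀ a b : C, a * b = b * a := by
    intro a b
    obtain ⟨p, hp⟩ := hg a
    obtain ⟨q, hq⟩ := hg b
    have hp' : g ^ p = a := hp
    have hq' : g ^ q = b := hq
    rw [← hp', ← hq', ← zpow_add, ← zpow_add, add_comm]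
  have hz : Subgroup.zpowers (x : C) ≤ K := Subgroup.zpowers_le.mpr x.2
  have hfin : (Subgroup.zpowers (x : C)).FiniteIndex := by
    set Z := Subgroup.zpowers (x : C) with hZ
    haveI hnorm : Z.Normal := ⟨fun z hz' c => by
      have : c * z * c⁻¹ = z := by rw [hcomm c z, mul_assoc, mul_inv_cancel, mul_one]
      rwa [this]⟩
    have hfinQ : Finite (C ⧸ Z) := by
      have hgen : IsOfFinOrder ((g : C) : C ⧸ Z) := by
        rw [isOfFinOrder_iff_zpow_eq_one]
        refine ⟨n, hn0, ?_⟩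
        have h1 : ((g ^ n : C) : C ⧸ Z) = 1 := by
          rw [hn']
          exact (QuotientGroup.eq_one_iff _).mpr (Subgroup.mem_zpowers _)
        simpa using h1
      have hfl : (Subgroup.zpowers ((g : C) : C ⧸ Z) : Set (C ⧸ Z)).Finite :=
        finite_zpowers.mpr hgen
      have hsurj : ∀ q : C ⧸ Z, q ∈ Subgroup.zpowers ((g : C) : C ⧸ Z) := by
        intro q
        obtain ⟨c, rfl⟩ := QuotientGroup.mk_surjective q
        obtain ⟨m, hm⟩ := hg c
        exact ⟨m, by rw [← hm]; simp⟩
      have huniv : (Set.univ : Set (C ⧸ Z)).Finite :=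
        hfl.subset fun q _ => hsurj q
      exact Set.finite_univ_iff.mp huniv
    exact Subgroup.finiteIndex_of_finite_quotient (H := Z)
  exact Subgroup.finiteIndex_of_le hz

/-- An infinite subgroup of a virtually cyclic group has finite index. -/
lemma aux_inf_finiteIndex {G : Type*} [Group G] (hvc : IsVirtuallyCyclic G)
    (K : Subgroup G) (hK : Infinite K) : K.FiniteIndex := by
  obtain ⟨H, hHc, hHfi⟩ := hvc
  have hrel : H.relIndex K ≠ 0 := fun h =>
    hHfi.index_ne_zero (Subgroup.index_eq_zero_of_relIndex_eq_zero h)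
  have hinfHK : Infinite (H.subgroupOf K) := by
    rw [← not_finite_iff_infinite]
    intro hfin
    have h1 : Nat.card (H.subgroupOf K) * (H.subgroupOf K).index = Nat.card K :=
      Subgroup.card_mul_index _
    have h2 : Nat.card K = 0 := Nat.card_eq_zero_of_infinite
    have h3 : Nat.card (H.subgroupOf K) ≠ 0 := Nat.card_pos.ne'
    rw [h2] at h1
    exact (mul_ne_zero h3 hrel) h1
  have hKH : ¬ Disjoint K H := by
    intro hdisj
    have hb : H.subgroupOf K = ⊥ := Subgroup.subgroupOf_eq_bot.mpr hdisj.symm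
    rw [hb] at hinfHK
    exact not_finite_iff_infinite.mpr hinfHK inferInstance
  have hbot : K.subgroupOf H ≠ ⊥ := fun h =>
    hKH (Subgroup.subgroupOf_eq_bot.mp h)
  haveI := hHc
  have hfiKH : (K.subgroupOf H).FiniteIndex := aux_cyclic_finiteIndex _ hbot
  have hle : K ⊓ H ≤ H := inf_le_right
  have hmul : (K ⊓ H).relIndex H * H.index = (K ⊓ H).index :=
    Subgroup.relIndex_mul_index hle
  have hrel2 : (K ⊓ H).relIndex H ≠ 0 := by
    unfold Subgroup.relIndex
    rw [Subgroup.inf_subgroupOf_right]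
    exact hfiKH.index_ne_zero
  have hidx : (K ⊓ H).index ≠ 0 := by
    rw [← hmul]; exact mul_ne_zero hrel2 hHfi.index_ne_zero
  haveI : (K ⊓ H).FiniteIndex := ⟨hidx⟩
  exact Subgroup.finiteIndex_of_le (inf_le_left : K ⊓ H ≤ K)

/-- An ascending chain of infinite virtually cyclic subgroups whose union is
virtually cyclic eventually stabilizes. -/
theorem stmt1 {G : Type*} [Group G] (S : ℕ → Subgroup G) (hmono : Monotone S)
    (hinf : ∀ i, Infinite (S i)) (hvc : ∀ i, IsVirtuallyCyclic (S i))
    (hunion : IsVirtuallyCyclic ↥(⨆ i, S i)) :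
    ∃ N, ∀ i ≥ N, S i = S N := by
  set U : Subgroup G := ⨆ i, S i with hU
  have hle : ∀ i, S i ≤ U := fun i => le_iSup S i
  set T : ℕ → Subgroup U := fun i => (S i).subgroupOf U with hT
  have hTmono : Monotone T := fun i j hij => Subgroup.comap_mono (hmono hij)
  haveI hT0inf : Infinite (T 0) := by
    haveI := hinf 0
    exact Infinite.of_injective _ (Subgroup.subgroupOfEquivOfLe (hle 0)).symm.injective
  haveI hT0fi : (T 0).FiniteIndex := aux_inf_finiteIndex hunion (T 0) hT0inf
  have hTfi : ∀ i, (T i).FiniteIndex := fun i =>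
    Subgroup.finiteIndex_of_le (hTmono (Nat.zero_le i))
  set f : ℕ → ℕ := fun i => (T i).index with hf
  have hne : (Set.range f).Nonempty := ⟨f 0, ⟨0, rfl⟩⟩
  obtain ⟨N, hN⟩ := Nat.sInf_mem hne
  refine ⟨N, fun i hi => ?_⟩
  have hTle : T N ≤ T i := hTmono hi
  have hTeq : T N = T i := by
    rcases hTle.lt_or_eq with hlt | heq
    · haveI := hTfi N
      have h1 : f i < f N := Subgroup.index_strictAnti hlt
      have h2 : sInf (Set.range f) ≤ f i := Nat.sInf_le ⟨i, rfl⟩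
      rw [hN] at h1
      omega
    · exact heq
  have hmap := congrArg (Subgroup.map U.subtype) hTeq
  rw [hT] at hmap
  simp only [Subgroup.subgroupOf_map_subtype, inf_eq_left.mpr (hle N),
    inf_eq_left.mpr (hle i)] at hmap
  exact hmap.symm
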